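/- Let T be an invertible measure preserving extension of S via π with disintegration (μ_y). Let A ∈ B with μ(A) > 0, ε > 0, B = {y : μ_y(A) > ε} with ν(B) > 0. Fix l ≥ 1 and n ∈ ℤ, and for k̄ = (k₁,…,k_l) ∈ {1,…,N}^l let q_{k̄}(x) = Σ_j k_j x^j. If ν(⋂_{k̄ ∈ {1,…,N}^l} S^{-q_{k̄}(n)} B) > 0, then there exists E ⊆ {1,…,N}^l with |E| ≥ εN^l such that μ(⋂_{k̄ ∈ E} T^{-q_{k̄}(n)} A) > 0. -/

import Mathlib

open MeasureTheory

section helpers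
variable {α : Type*} [MeasurableSpace α] {μ : Measure α}

lemma measurable_perm_pow (T : Equiv.Perm α) (h : Measurable T) :
    ∀ m : ℕ, Measurable ⇑(T ^ m)
  | 0 => by rw [pow_zero, Equiv.Perm.coe_one]; exact measurable_id
  | (m+1) => by
      rw [pow_succ, Equiv.Perm.coe_mul]
      exact (measurable_perm_pow T h m).comp h

lemma mp_perm_pow (T : Equiv.Perm α) (hT : MeasurePreserving T μ μ) :
    ∀ m : ℕ, MeasurePreserving ⇑(T ^ m) μ μ
  | 0 => by simpa using MeasurePreserving.id μ
  | (m+1) => by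
      rw [pow_succ, Equiv.Perm.coe_mul]
      exact (mp_perm_pow T hT m).comp hT

lemma perm_pow_symm (T : Equiv.Perm α) (m : ℕ) : (T ^ m).symm = T.symm ^ m := by
  rw [← Equiv.Perm.inv_def, ← Equiv.Perm.inv_def, inv_pow]

lemma mp_symm (e : Equiv.Perm α) (he : MeasurePreserving e μ μ) (he' : Measurable e.symm) :
    MeasurePreserving ⇑e.symm μ μ := by
  refine ⟨he', ?_⟩
  conv_lhs => rw [← he.map_eq]
  rw [Measure.map_map he' he.measurable, Equiv.symm_comp_self, Measure.map_id]

lemma measurable_perm_zpow (T : Equiv.Perm α) (h : Measurable T) (h' : Measurable T.symm) :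
    ∀ q : ℤ, Measurable ⇑(T ^ q)
  | Int.ofNat m => by rw [Int.ofNat_eq_natCast, zpow_natCast]; exact measurable_perm_pow T h m
  | Int.negSucc m => by
      rw [zpow_negSucc, Equiv.Perm.inv_def, perm_pow_symm]
      exact measurable_perm_pow T.symm h' (m+1)

lemma mp_perm_zpow (T : Equiv.Perm α) (hT : MeasurePreserving T μ μ) (hT' : Measurable T.symm) :
    ∀ q : ℤ, MeasurePreserving ⇑(T ^ q) μ μ
  | Int.ofNat m => by rw [Int.ofNat_eq_natCast, zpow_natCast]; exact mp_perm_pow T hT m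
  | Int.negSucc m => by
      rw [zpow_negSucc, Equiv.Perm.inv_def]
      exact mp_symm _ (mp_perm_pow T hT (m+1))
        (by rw [perm_pow_symm]; exact measurable_perm_pow T.symm hT' (m+1))

lemma measurable_perm_zpow_symm (T : Equiv.Perm α) (h : Measurable T) (h' : Measurable T.symm)
    (q : ℤ) : Measurable ⇑(T ^ q).symm := by
  rw [← Equiv.Perm.inv_def, ← zpow_neg]
  exact measurable_perm_zpow T h h' (-q)

lemma semiconj_symm {β : Type*} (T : Equiv.Perm α) (S : Equiv.Perm β) (π : α → β)
    (h : π ∘ ⇑T = ⇑S ∘ π) : π ∘ ⇑T.symm = ⇑S.symm ∘ π := by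
  funext x
  have h1 := congrFun h (T.symm x)
  simp only [Function.comp_apply, Equiv.apply_symm_apply] at h1
  simp only [Function.comp_apply, h1, Equiv.symm_apply_apply]

lemma semiconj_pow {β : Type*} (T : Equiv.Perm α) (S : Equiv.Perm β) (π : α → β)
    (h : π ∘ ⇑T = ⇑S ∘ π) : ∀ m : ℕ, π ∘ ⇑(T ^ m) = ⇑(S ^ m) ∘ π
  | 0 => by simp
  | (m+1) => by
      rw [pow_succ, pow_succ, Equiv.Perm.coe_mul, Equiv.Perm.coe_mul, ← Function.comp_assoc,
        semiconj_pow T S π h m, Function.comp_assoc, h, ← Function.comp_assoc]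

lemma semiconj_zpow {β : Type*} (T : Equiv.Perm α) (S : Equiv.Perm β) (π : α → β)
    (h : π ∘ ⇑T = ⇑S ∘ π) : ∀ q : ℤ, π ∘ ⇑(T ^ q) = ⇑(S ^ q) ∘ π
  | Int.ofNat m => by
      rw [Int.ofNat_eq_natCast, zpow_natCast, zpow_natCast]; exact semiconj_pow T S π h m
  | Int.negSucc m => by
      rw [zpow_negSucc, zpow_negSucc, Equiv.Perm.inv_def, Equiv.Perm.inv_def]
      exact semiconj_symm _ _ _ (semiconj_pow T S π h (m+1))

end helpers

/-- The value `q_{k̄}(n) = Σ_{j=1}^l k_j n^j` for `k̄ ∈ ℕ^l`. -/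
def qVal {l : ℕ} (kk : Fin l → ℕ) (n : ℤ) : ℤ :=
  ∑ j : Fin l, (kk j : ℤ) * n ^ ((j : ℕ) + 1)

/-- From polynomial recurrence of the base to a positive-density set of
polynomial return times in the fiber. -/
theorem stmt_8 {X Y : Type*} [MeasurableSpace X] [MeasurableSpace Y]
    (μ : Measure X) (ν : Measure Y) [SigmaFinite μ] [SigmaFinite ν]
    (S : Equiv.Perm Y) (hSm : Measurable S) (hSm' : Measurable S.symm)
    (hS : MeasurePreserving S ν ν)
    (T : Equiv.Perm X) (hTm : Measurable T) (hTm' : Measurable T.symm)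
    (hT : MeasurePreserving T μ μ)
    (π : X → Y) (hπ : Measurable π) (hcomm : π ∘ ⇑T = ⇑S ∘ π)
    (hpush : Measure.map π μ = ν)
    (κ : Y → Measure X)
    (hκmeas : ∀ A : Set X, MeasurableSet A → Measurable fun y => κ y A)
    (hκdis : ∀ B : Set Y, MeasurableSet B → ∀ A : Set X, MeasurableSet A →
      ∫⁻ y in B, κ y A ∂ν = μ (A ∩ π ⁻¹' B))
    (A : Set X) (hA : MeasurableSet A) (hApos : 0 < μ A)
    (ε : ENNReal) (hε : 0 < ε)
    (B : Set Y) (hB : B = {y : Y | ε < κ y A}) (hBpos : 0 < ν B)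
    (l N : ℕ) (hl : 1 ≤ l) (n : ℤ)
    (hrec : 0 < ν (⋂ kk ∈ Fintype.piFinset (fun _ : Fin l => Finset.Icc 1 N),
      ⇑(S ^ qVal kk n) ⁻¹' B)) :
    ∃ E ⊆ Fintype.piFinset (fun _ : Fin l => Finset.Icc 1 N),
      ε * (N : ENNReal) ^ l ≤ (E.card : ENNReal) ∧
      0 < μ (⋂ kk ∈ E, ⇑(T ^ qVal kk n) ⁻¹' A) := by
  classical
  set P : Finset (Fin l → ℕ) := Fintype.piFinset (fun _ : Fin l => Finset.Icc 1 N) with hP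
  -- trivial case N = 0
  rcases Nat.eq_zero_or_pos N with hN | hN
  · refine ⟨∅, Finset.empty_subset _, ?_, ?_⟩
    · subst hN
      simp [zero_pow (Nat.one_le_iff_ne_zero.mp hl)]
    · simpa using lt_of_lt_of_le hApos (measure_mono (Set.subset_univ A))
  have hPcard : P.card = N ^ l := by
    simp [hP, Fintype.card_piFinset, Nat.card_Icc]
  have hPne : P.Nonempty := by
    refine ⟨fun _ => 1, ?_⟩
    simp only [hP, Fintype.mem_piFinset, Finset.mem_Icc]
    exact fun _ => ⟨le_refl 1, hN⟩
  -- measure-preserving and measurability facts for powers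
  have hSq : ∀ q : ℤ, MeasurePreserving ⇑(S ^ q) ν ν := mp_perm_zpow S hS hSm'
  have hTq : ∀ q : ℤ, MeasurePreserving ⇑(T ^ q) μ μ := mp_perm_zpow T hT hTm'
  have hSq' : ∀ q : ℤ, Measurable ⇑(S ^ q).symm := measurable_perm_zpow_symm S hSm hSm'
  have hTq' : ∀ q : ℤ, Measurable ⇑(T ^ q).symm := measurable_perm_zpow_symm T hTm hTm'
  have hcz : ∀ q : ℤ, π ∘ ⇑(T ^ q) = ⇑(S ^ q) ∘ π := semiconj_zpow T S π hcomm
  -- fiber sets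
  set A' : (Fin l → ℕ) → Set X := fun kk => ⇑(T ^ qVal kk n) ⁻¹' A with hA'
  have hA'meas : ∀ kk, MeasurableSet (A' kk) := fun kk => hA.preimage (hTq _).measurable
  -- Step A : κ y univ = 1 a.e.
  have hone : ∀ᵐ y ∂ν, κ y Set.univ = 1 := by
    have : (fun y => κ y Set.univ) =ᵐ[ν] (fun _ => (1 : ENNReal)) := by
      refine ae_eq_of_forall_setLIntegral_eq_of_sigmaFinite
        (hκmeas _ MeasurableSet.univ) measurable_const (fun s hs _ => ?_)
      rw [hκdis s hs _ MeasurableSet.univ, Set.univ_inter, lintegral_const,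
        Measure.restrict_apply_univ, one_mul, ← hpush, Measure.map_apply hπ hs]
    exact this
  -- Step B : intertwining for each power
  have hint : ∀ q : ℤ, ∀ᵐ y ∂ν, κ (⇑(S ^ q) y) A = κ y (⇑(T ^ q) ⁻¹' A) := by
    intro q
    have hmeasA' : MeasurableSet (⇑(T ^ q) ⁻¹' A) := hA.preimage (hTq q).measurable
    have hemb : MeasurableEmbedding ⇑(S ^ q) :=
      (MeasurableEquiv.mk (S ^ q) (hSq q).measurable (hSq' q)).measurableEmbedding
    refine ae_eq_of_forall_setLIntegral_eq_of_sigmaFinite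
      ((hκmeas _ hA).comp (hSq q).measurable) (hκmeas _ hmeasA') (fun s hs _ => ?_)
    have h1 : ∫⁻ y in s, κ (⇑(S ^ q) y) A ∂ν = ∫⁻ z in ⇑(S ^ q) '' s, κ z A ∂ν :=
      (hSq q).setLIntegral_comp_emb hemb (fun z => κ z A) s
    have himg : ⇑(S ^ q) '' s = ⇑(S ^ q).symm ⁻¹' s := by
      ext z
      simp only [Set.mem_image, Set.mem_preimage]
      constructor
      · rintro ⟨w, hw, rfl⟩; simpa using hw
      · intro hw; exact ⟨(S ^ q).symm z, hw, by simp⟩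
    have hsm : MeasurableSet (⇑(S ^ q).symm ⁻¹' s) := hs.preimage (hSq' q)
    rw [h1, himg, hκdis _ hsm _ hA, hκdis _ hs _ hmeasA']
    have hsemi : π ∘ ⇑(T ^ q).symm = ⇑(S ^ q).symm ∘ π := semiconj_symm _ _ _ (hcz q)
    have hset : π ⁻¹' (⇑(S ^ q).symm ⁻¹' s) = ⇑(T ^ q).symm ⁻¹' (π ⁻¹' s) := by
      rw [← Set.preimage_comp, ← hsemi, Set.preimage_comp]
    rw [hset]
    have hmeasW : MeasurableSet (A ∩ ⇑(T ^ q).symm ⁻¹' (π ⁻¹' s)) :=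
      hA.inter ((hs.preimage hπ).preimage (hTq' q))
    have hmp := (hTq q).measure_preimage hmeasW.nullMeasurableSet
    have hpre : ⇑(T ^ q) ⁻¹' (A ∩ ⇑(T ^ q).symm ⁻¹' (π ⁻¹' s))
        = ⇑(T ^ q) ⁻¹' A ∩ π ⁻¹' s := by
      ext x; simp
    rw [← hmp, hpre]
  -- combine a.e. facts over all kk
  have h2 : ∀ᵐ y ∂ν, ∀ kk : Fin l → ℕ, kk ∈ P →
      κ (⇑(S ^ qVal kk n) y) A = κ y (A' kk) :=
    ae_all_iff.2 fun kk => (hint (qVal kk n)).mono fun y hy _ => hy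
  -- ε < 1
  have hε1 : ε < 1 := by
    have hfreq : ∃ᵐ y ∂ν, y ∈ B := frequently_ae_mem_iff.2 hBpos.ne'
    obtain ⟨y, hyB, hy1⟩ := (hfreq.and_eventually hone).exists
    have hlt : ε < κ y A := by rw [hB] at hyB; exact hyB
    calc ε < κ y A := hlt
      _ ≤ κ y Set.univ := measure_mono (Set.subset_univ _)
      _ = 1 := hy1
  -- abbreviations
  set c : ENNReal := ε * (P.card : ENNReal) with hc
  have hcN : c = ε * (N : ENNReal) ^ l := by
    rw [hc, hPcard]; push_cast; ring
  have hcne : c ≠ ⊤ := by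
    rw [hc]
    exact ENNReal.mul_ne_top (hε1.trans_le le_top).ne (ENNReal.natCast_ne_top _)
  set F : Finset (Finset (Fin l → ℕ)) :=
    P.powerset.filter (fun E => c ≤ (E.card : ENNReal)) with hF
  set I : Finset (Fin l → ℕ) → Set X := fun E => ⋂ kk ∈ E, A' kk with hI
  have hImeas : ∀ E : Finset (Fin l → ℕ), MeasurableSet (I E) := fun E =>
    MeasurableSet.biInter (E.countable_toSet) fun kk _ => hA'meas kk
  -- per-y claim
  have hclaim : ∀ y : Y, κ y Set.univ = 1 →
      (∀ kk ∈ P, ε < κ y (A' kk)) → ∃ E ∈ F, 0 < κ y (I E) := by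
    intro y hy1 hylt
    by_contra hcon
    push_neg at hcon
    have hzero : ∀ E ∈ F, κ y (I E) = 0 := fun E hE => le_antisymm (hcon E hE) zero_le
    set Z : Set X := ⋃ E ∈ F, I E with hZ
    have hZ0 : κ y Z = 0 := by
      have hzc : Z = ⋃ E ∈ (↑F : Set (Finset (Fin l → ℕ))), I E := by simp [hZ]
      rw [hzc, measure_biUnion_null_iff F.countable_toSet]
      exact fun E hE => hzero E hE
    -- pointwise bound off Z
    have hcard : ∀ x : X, x ∉ Z →
        ((P.filter fun kk => x ∈ A' kk).card : ENNReal) < c := by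
      intro x hx
      by_contra hge
      push_neg at hge
      apply hx
      rw [hZ]
      refine Set.mem_biUnion (show (P.filter fun kk => x ∈ A' kk) ∈ F from ?_) ?_
      · rw [hF, Finset.mem_filter, Finset.mem_powerset]
        exact ⟨Finset.filter_subset _ _, hge⟩
      · rw [hI]
        exact Set.mem_biInter fun kk hkk => (Finset.mem_filter.mp hkk).2
    set g : X → ENNReal := fun x => ∑ kk ∈ P, (A' kk).indicator (fun _ => 1) x with hg
    have hg_eq : ∀ x, g x = ((P.filter fun kk => x ∈ A' kk).card : ENNReal) := by
      intro x
      rw [hg, Finset.card_filter, Nat.cast_sum]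
      refine Finset.sum_congr rfl fun kk _ => ?_
      by_cases hx : x ∈ A' kk <;> simp [Set.indicator_apply, hx]
    -- upper bound
    have hup : ∫⁻ x, g x ∂(κ y) ≤ c := by
      have hae : ∀ᵐ x ∂(κ y), g x ≤ c := by
        have : ∀ᵐ x ∂(κ y), x ∉ Z := by
          rw [ae_iff]
          simpa using hZ0
        exact this.mono fun x hx => by rw [hg_eq x]; exact (hcard x hx).le
      calc ∫⁻ x, g x ∂(κ y) ≤ ∫⁻ _, c ∂(κ y) := lintegral_mono_ae hae
        _ = c * κ y Set.univ := lintegral_const c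
        _ = c := by rw [hy1, mul_one]
    -- lower bound
    have hlow : c < ∫⁻ x, g x ∂(κ y) := by
      have hsum : ∫⁻ x, g x ∂(κ y) = ∑ kk ∈ P, κ y (A' kk) := by
        rw [hg, lintegral_finset_sum _ fun kk _ =>
          (measurable_const.indicator (hA'meas kk))]
        exact Finset.sum_congr rfl fun kk _ => lintegral_indicator_one (hA'meas kk)
      obtain ⟨kk₀, hkk₀⟩ := hPne
      rw [hsum, ← Finset.add_sum_erase _ _ hkk₀]
      have hrest : ((P.erase kk₀).card : ENNReal) * ε ≤ ∑ kk ∈ P.erase kk₀, κ y (A' kk) := by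
        calc ((P.erase kk₀).card : ENNReal) * ε = ∑ _kk ∈ P.erase kk₀, ε := by
              rw [Finset.sum_const, nsmul_eq_mul]
          _ ≤ ∑ kk ∈ P.erase kk₀, κ y (A' kk) :=
              Finset.sum_le_sum fun kk hkk => (hylt kk (Finset.mem_of_mem_erase hkk)).le
      have htne : ((P.erase kk₀).card : ENNReal) * ε ≠ ⊤ :=
        ENNReal.mul_ne_top (ENNReal.natCast_ne_top _) (hε1.trans_le le_top).ne
      have hstep : c < κ y (A' kk₀) + ((P.erase kk₀).card : ENNReal) * ε := by
        have hcard' : (P.erase kk₀).card = P.card - 1 := Finset.card_erase_of_mem hkk₀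
        have h1 : c = ε + ((P.erase kk₀).card : ENNReal) * ε := by
          rw [hc, hcard']
          have hcp : 1 ≤ P.card := Finset.card_pos.mpr ⟨kk₀, hkk₀⟩
          have : ((P.card - 1 : ℕ) : ENNReal) + 1 = (P.card : ENNReal) := by
            norm_cast
            omega
          calc ε * (P.card : ENNReal) = ε * (((P.card - 1 : ℕ) : ENNReal) + 1) := by rw [this]
            _ = ε + ((P.card - 1 : ℕ) : ENNReal) * ε := by ring
        rw [h1]
        exact (ENNReal.add_lt_add_iff_right htne).mpr (hylt kk₀ hkk₀)
      exact hstep.trans_le (add_le_add_right hrest _)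
    exact absurd (hlow.trans_le hup) (lt_irrefl c)
  -- find a positive-measure set of good y's
  have hfreqC : ∃ᵐ y ∂ν, y ∈ ⋂ kk ∈ P, ⇑(S ^ qVal kk n) ⁻¹' B :=
    frequently_ae_mem_iff.2 hrec.ne'
  have hgood : ∃ᵐ y ∂ν, ∃ E ∈ F, 0 < κ y (I E) := by
    refine (hfreqC.and_eventually (hone.and h2)).mono ?_
    rintro y ⟨hyC, hy1, hy2⟩
    refine hclaim y hy1 fun kk hkk => ?_
    have hyB : ⇑(S ^ qVal kk n) y ∈ B := by
      have := Set.mem_iInter₂.mp hyC kk hkk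
      exact this
    rw [← hy2 kk hkk]
    rw [hB] at hyB
    exact hyB
  -- pigeonhole over the finitely many E's
  have hUnionpos : ν (⋃ E ∈ F, {y | 0 < κ y (I E)}) ≠ 0 := by
    rw [← frequently_ae_mem_iff]
    refine hgood.mono ?_
    rintro y ⟨E, hEF, hEpos⟩
    exact Set.mem_biUnion hEF hEpos
  have hexE : ∃ E ∈ F, 0 < ν {y | 0 < κ y (I E)} := by
    by_contra hcon
    push_neg at hcon
    apply hUnionpos
    refine le_antisymm ?_ zero_le
    calc ν (⋃ E ∈ F, {y | 0 < κ y (I E)}) ≤ ∑ E ∈ F, ν {y | 0 < κ y (I E)} :=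
          measure_biUnion_finset_le F _
      _ = 0 := Finset.sum_eq_zero fun E hE => le_antisymm (hcon E hE) zero_le
  obtain ⟨E, hEF, hEpos⟩ := hexE
  rw [hF, Finset.mem_filter, Finset.mem_powerset] at hEF
  refine ⟨E, hEF.1, by rw [← hcN]; exact hEF.2, ?_⟩
  -- positivity of μ of the intersection
  have hμ : μ (I E) = ∫⁻ y, κ y (I E) ∂ν := by
    have h := hκdis Set.univ MeasurableSet.univ (I E) (hImeas E)
    rw [Measure.restrict_univ, Set.preimage_univ, Set.inter_univ] at h
    exact h.symm
  show 0 < μ (I E)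
  rw [hμ, lintegral_pos_iff_support (hκmeas _ (hImeas E))]
  refine lt_of_lt_of_le hEpos (measure_mono ?_)
  exact fun y hy => hy.ne'
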